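/- Let 0<q<1, b<0<a, c,d ∈ ℂ with d = conj(c) and c ∉ ℝ. Define D as the q-difference operator D f(x) = σ⁺(x)(f(qx)-f(x)) + σ⁻(x)(f(x/q)-f(x)) with σ⁺(x) = -(q/(ab))(c-1/x)(d-1/x), σ⁻(x) = -(q²/(ab))(a/q-1/x)(b/q-1/x). Then D maps the polynomial ring ℝ[x] (restricted to x ≠ 0) into itself; that is, for every polynomial p, the function Dp extends to a polynomial. -/

import Mathlib

theorem bigQJacobi_D_preserves_polynomials
    (q a b : ℝ) (c d : ℂ)
    (hq : 0 < q) (hq1 : q < 1) (hb : b < 0) (ha : 0 < a)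
    (hd : d = starRingEnd ℂ c) (hc : c.im ≠ 0)
    (p : Polynomial ℝ) :
    ∃ P : Polynomial ℝ, ∀ x : ℝ, x ≠ 0 →
      (-((q : ℂ)/((a : ℂ)*(b : ℂ))) * (c - (x : ℂ)⁻¹) * (d - (x : ℂ)⁻¹))
          * ((p.eval (q * x) : ℝ) - (p.eval x : ℝ))
        + (-((q : ℂ)^2/((a : ℂ)*(b : ℂ))) * ((a : ℂ)/(q : ℂ) - (x : ℂ)⁻¹)
            * ((b : ℂ)/(q : ℂ) - (x : ℂ)⁻¹))
          * ((p.eval (x / q) : ℝ) - (p.eval x : ℝ))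
      = (P.eval x : ℝ) := by
  have hq0 : (q:ℝ) ≠ 0 := ne_of_gt hq
  have ha0 : (a:ℝ) ≠ 0 := ne_of_gt ha
  have hb0 : (b:ℝ) ≠ 0 := ne_of_lt hb
  obtain ⟨A, B, h1, h2⟩ : ∃ A B : ℝ, c * d = (A:ℂ) ∧ c + d = (B:ℂ) := by
    refine ⟨Complex.normSq c, 2 * c.re, ?_, ?_⟩
    · rw [hd]; exact Complex.mul_conj c
    · rw [hd, Complex.add_conj]
  have h3 : ∀ x : ℝ, (c - (x:ℂ)⁻¹) * (d - (x:ℂ)⁻¹)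
      = (A:ℂ) - (B:ℂ) * ((x:ℂ)⁻¹) + ((x:ℂ)⁻¹)^2 := by
    intro x
    linear_combination h1 - ((x:ℂ))⁻¹ * h2
  -- reduce to a real statement
  suffices h : ∃ P : Polynomial ℝ, ∀ x : ℝ, x ≠ 0 →
      (-(q/(a*b)) * (A - B * x⁻¹ + (x⁻¹)^2)) * (p.eval (q*x) - p.eval x)
      + (-(q^2/(a*b)) * (a/q - x⁻¹) * (b/q - x⁻¹)) * (p.eval (x/q) - p.eval x)
      = P.eval x by
    obtain ⟨P, hP⟩ := h
    refine ⟨P, fun x hx => ?_⟩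
    rw [← hP x hx]
    push_cast
    linear_combination (-((q:ℂ)/((a:ℂ)*(b:ℂ))) *
      (((p.eval (q*x) : ℝ) : ℂ) - ((p.eval x : ℝ) : ℂ))) * h3 x
  clear h1 h2 h3 hd hc
  induction p using Polynomial.induction_on' with
  | add p r hp hr =>
    obtain ⟨P, hP⟩ := hp
    obtain ⟨R, hR⟩ := hr
    refine ⟨P + R, fun x hx => ?_⟩
    simp only [Polynomial.eval_add]
    linear_combination hP x hx + hR x hx
  | monomial n t =>
    match n with
    | 0 =>
      refine ⟨0, fun x hx => ?_⟩
      simp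
    | 1 =>
      refine ⟨Polynomial.C t * (Polynomial.C ((q-1) * (-(q*A/(a*b))) - (q⁻¹-1)) * Polynomial.X
          + Polynomial.C ((q-1) * (q*B/(a*b)) + (q⁻¹-1) * (q*(a+b)/(a*b)))), fun x hx => ?_⟩
      simp only [Polynomial.eval_mul, Polynomial.eval_add, Polynomial.eval_C, Polynomial.eval_X,
        Polynomial.eval_monomial, pow_one]
      field_simp
      ring
    | (m+2) =>
      refine ⟨(Polynomial.C (t*(q^(m+2)-1)*(-(q/(a*b)))) *
            (Polynomial.C A * Polynomial.X^2 - Polynomial.C B * Polynomial.X + 1)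
          + Polynomial.C (t*((q^(m+2))⁻¹-1)*(-(q^2/(a*b)))) *
            (Polynomial.C (a*b/q^2) * Polynomial.X^2 - Polynomial.C ((a+b)/q) * Polynomial.X + 1))
          * Polynomial.X^m, fun x hx => ?_⟩
      simp only [Polynomial.eval_mul, Polynomial.eval_add, Polynomial.eval_sub, Polynomial.eval_C,
        Polynomial.eval_X, Polynomial.eval_pow, Polynomial.eval_one, Polynomial.eval_monomial]
      have hqi : q^2*q^m*(q⁻¹^2*q⁻¹^m) = 1 := by
        rw [mul_mul_mul_comm, ← mul_pow, ← mul_pow, mul_inv_cancel₀ hq0, one_pow, one_pow, one_mul]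
      field_simp
      linear_combination (-t*x^4*x^m*a*b + t*q*x^3*x^m*(a+b) - t*q^2*x^2*x^m) * hqi
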